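/- arXiv:2312.16754 — 8 statements merged into one kernel-verified Lean document; each statement's English description precedes it below -/
import Mathlib

section
/- In a Boolean algebra with an S4 operator ◇ and an S5 operator ∃, the inequality ∃◇a ≤ ◇∃a (for all a) holds iff the identity ∀□∀a = □∀a holds for all a, where □a = ¬◇¬a and ∀a = ¬∃¬a. -/
/-- The dual "necessity" operator of a possibility operator `f`: `boxOf f a = (f aᶜ)ᶜ`. -/
def boxOf {B : Type*} [BooleanAlgebra B] (f : B → B) (a : B) : B := (f aᶜ)ᶜ

/-- `∃◇a ≤ ◇∃a` holds for all `a` iff `∀□∀a = □∀a` holds for all `a`. -/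
theorem stmt1 {B : Type*} [BooleanAlgebra B] (dia ex : B → B)
    (hdia0 : dia (⊥ : B) = ⊥)
    (hdia_or : ∀ a b : B, dia (a ⊔ b) = dia a ⊔ dia b)
    (hdia_le : ∀ a : B, a ≤ dia a)
    (hdia_idem : ∀ a : B, dia (dia a) ≤ dia a)
    (hex0 : ex (⊥ : B) = ⊥)
    (hex_or : ∀ a b : B, ex (a ⊔ b) = ex a ⊔ ex b)
    (hex_le : ∀ a : B, a ≤ ex a)
    (hex_idem : ∀ a : B, ex (ex a) ≤ ex a)
    (hex5 : ∀ a : B, ex ((ex aᶜ)ᶜ) ≤ (ex aᶜ)ᶜ) :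
    (∀ a : B, ex (dia a) ≤ dia (ex a)) ↔
      (∀ a : B, boxOf ex (boxOf dia (boxOf ex a)) = boxOf dia (boxOf ex a)) := by
  have hdia_mono : ∀ a b : B, a ≤ b → dia a ≤ dia b := by
    intro a b h
    have : dia b = dia a ⊔ dia b := by rw [← hdia_or, sup_eq_right.mpr h]
    rw [this]; exact le_sup_left
  have hex_mono : ∀ a b : B, a ≤ b → ex a ≤ ex b := by
    intro a b h
    have : ex b = ex a ⊔ ex b := by rw [← hex_or, sup_eq_right.mpr h]
    rw [this]; exact le_sup_left
  constructor
  · intro H a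
    -- □∀a : key object. Let c = boxOf dia (boxOf ex a)
    -- ≤ : boxOf ex c ≤ c  (since c ≤ ex c, complement)
    -- ≥ : need c ≤ boxOf ex c, i.e. ex cᶜ ≤ cᶜ, with cᶜ = dia (ex aᶜ)
    apply le_antisymm
    · -- boxOf ex c = (ex cᶜ)ᶜ ≤ c ↔ cᶜ ≤ ex cᶜ
      simp only [boxOf]
      exact compl_le_compl (hex_le _) |>.trans_eq (by rw [compl_compl])
    · simp only [boxOf, compl_compl]
      rw [compl_le_compl_iff_le]
      calc ex (dia (ex aᶜ)) ≤ dia (ex (ex aᶜ)) := H _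
        _ ≤ dia (ex aᶜ) := hdia_mono _ _ (hex_idem _)
  · intro H a
    have key := H aᶜ
    simp only [boxOf, compl_compl] at key
    -- boxOf ex aᶜ = (ex aᶜᶜ)ᶜ = (ex a)ᶜ
    -- boxOf dia (ex a)ᶜ = (dia (ex a))ᶜ
    -- boxOf ex ((dia (ex a))ᶜ) = (ex (dia (ex a)))ᶜ
    -- key : (ex (dia (ex a)))ᶜ = (dia (ex a))ᶜ, hence ex (dia (ex a)) = dia (ex a)
    have key2 : ex (dia (ex a)) = dia (ex a) := compl_injective key
    calc ex (dia a) ≤ ex (dia (ex a)) := hex_mono _ _ (hdia_mono _ _ (hex_le a))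
      _ = dia (ex a) := key2
end

section
/- In a Boolean algebra with an S4 operator ◇ and an S5 operator ∃, the inequality ∃□a ≤ □∃a (for all a) holds iff the identity ◇∀◇a = ∀◇a holds for all a. -/
/-- `∃□a ≤ □∃a` holds for all `a` iff `◇∀◇a = ∀◇a` holds for all `a`. -/
theorem stmt2 {B : Type*} [BooleanAlgebra B] (dia ex : B → B)
    (hdia0 : dia (⊥ : B) = ⊥)
    (hdia_or : ∀ a b : B, dia (a ⊔ b) = dia a ⊔ dia b)
    (hdia_le : ∀ a : B, a ≤ dia a)
    (hdia_idem : ∀ a : B, dia (dia a) ≤ dia a)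
    (hex0 : ex (⊥ : B) = ⊥)
    (hex_or : ∀ a b : B, ex (a ⊔ b) = ex a ⊔ ex b)
    (hex_le : ∀ a : B, a ≤ ex a)
    (hex_idem : ∀ a : B, ex (ex a) ≤ ex a)
    (hex5 : ∀ a : B, ex ((ex aᶜ)ᶜ) ≤ (ex aᶜ)ᶜ) :
    (∀ a : B, ex (boxOf dia a) ≤ boxOf dia (ex a)) ↔
      (∀ a : B, dia (boxOf ex (dia a)) = boxOf ex (dia a)) := by
  have dmono : ∀ {a b : B}, a ≤ b → dia a ≤ dia b := by
    intro a b h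
    have h1 : dia (a ⊔ b) = dia b := by rw [sup_eq_right.mpr h]
    rw [hdia_or] at h1
    exact le_sup_left.trans h1.le
  have emono : ∀ {a b : B}, a ≤ b → ex a ≤ ex b := by
    intro a b h
    have h1 : ex (a ⊔ b) = ex b := by rw [sup_eq_right.mpr h]
    rw [hex_or] at h1
    exact le_sup_left.trans h1.le
  have ddia : ∀ a : B, dia (dia a) = dia a :=
    fun a => le_antisymm (hdia_idem a) (hdia_le _)
  constructor
  · intro H a
    refine le_antisymm ?_ (hdia_le _)
    simp only [boxOf] at *
    -- key: boxOf dia ((dia a)ᶜ) = (dia a)ᶜ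
    have hc : (dia ((dia a)ᶜ)ᶜ)ᶜ = (dia a)ᶜ := by rw [compl_compl, ddia]
    have h1 := H ((dia a)ᶜ)
    rw [hc] at h1
    -- h1 : ex (dia a)ᶜ ≤ (dia ((ex (dia a)ᶜ)ᶜ))ᶜ
    have h2 := compl_le_compl h1
    rwa [compl_compl] at h2
  · intro G a
    simp only [boxOf] at *
    rw [le_compl_comm]
    -- goal : dia ((ex a)ᶜ) ≤ (ex ((dia aᶜ)ᶜ))ᶜ
    have h1 : ex ((dia aᶜ)ᶜ) ≤ ex a := by
      apply emono
      have := compl_le_compl (hdia_le aᶜ)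
      rwa [compl_compl] at this
    have h2 : dia ((ex a)ᶜ) ≤ dia ((ex ((dia aᶜ)ᶜ))ᶜ) := dmono (compl_le_compl h1)
    calc dia ((ex a)ᶜ) ≤ dia ((ex ((dia aᶜ)ᶜ))ᶜ) := h2
      _ = (ex ((dia aᶜ)ᶜ))ᶜ := G aᶜ
end

section
/- In any MS4_S-algebra, the operator ♦ = ◇∃ is an S5 possibility operator; moreover the algebra (B, ♦, ∃) satisfies the S5² commutativity ∃♦a = ♦a = ♦∃a for all a. -/
/-- In any MS4_S-algebra, `♦ = ◇∃` is an S5 possibility operator and the algebra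
`(B, ♦, ∃)` satisfies `∃♦a = ♦a = ♦∃a`. -/
theorem stmt9 {B : Type*} [BooleanAlgebra B] (dia ex : B → B)
    (hdia0 : dia (⊥ : B) = ⊥)
    (hdia_or : ∀ a b : B, dia (a ⊔ b) = dia a ⊔ dia b)
    (hdia_le : ∀ a : B, a ≤ dia a)
    (hdia_idem : ∀ a : B, dia (dia a) ≤ dia a)
    (hex0 : ex (⊥ : B) = ⊥)
    (hex_or : ∀ a b : B, ex (a ⊔ b) = ex a ⊔ ex b)
    (hex_le : ∀ a : B, a ≤ ex a)
    (hex_idem : ∀ a : B, ex (ex a) ≤ ex a)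
    (hex5 : ∀ a : B, ex ((ex aᶜ)ᶜ) ≤ (ex aᶜ)ᶜ)
    (hms4 : ∀ a : B, ex (dia a) ≤ dia (ex a))
    (hS : ∀ a : B, dia (ex ((dia (ex aᶜ))ᶜ)) ≤ (dia (ex aᶜ))ᶜ) :
    dia (ex (⊥ : B)) = ⊥ ∧
    (∀ a b : B, dia (ex (a ⊔ b)) = dia (ex a) ⊔ dia (ex b)) ∧
    (∀ a : B, a ≤ dia (ex a)) ∧
    (∀ a : B, dia (ex (dia (ex a))) ≤ dia (ex a)) ∧
    (∀ a : B, dia (ex ((dia (ex aᶜ))ᶜ)) ≤ (dia (ex aᶜ))ᶜ) ∧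
    (∀ a : B, ex (dia (ex a)) = dia (ex a)) ∧
    (∀ a : B, dia (ex (ex a)) = dia (ex a)) := by
  have dmono : ∀ a b : B, a ≤ b → dia a ≤ dia b := fun a b h => by
    have : a ⊔ b = b := sup_eq_right.mpr h
    calc dia a ≤ dia a ⊔ dia b := le_sup_left
      _ = dia (a ⊔ b) := (hdia_or a b).symm
      _ = dia b := by rw [this]
  have emono : ∀ a b : B, a ≤ b → ex a ≤ ex b := fun a b h => by
    have : a ⊔ b = b := sup_eq_right.mpr h
    calc ex a ≤ ex a ⊔ ex b := le_sup_left
      _ = ex (a ⊔ b) := (hex_or a b).symm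
      _ = ex b := by rw [this]
  refine ⟨by rw [hex0, hdia0], fun a b => by rw [hex_or, hdia_or], fun a => le_trans (hex_le a) (hdia_le _), fun a => ?_, hS, fun a => ?_, fun a => ?_⟩
  · calc dia (ex (dia (ex a))) ≤ dia (dia (ex (ex a))) := dmono _ _ (hms4 _)
      _ ≤ dia (ex (ex a)) := hdia_idem _
      _ ≤ dia (ex a) := dmono _ _ (hex_idem a)
  · refine le_antisymm ?_ (hex_le _)
    calc ex (dia (ex a)) ≤ dia (ex (ex a)) := hms4 _
      _ ≤ dia (ex a) := dmono _ _ (hex_idem a)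
  · exact le_antisymm (dmono _ _ (hex_idem a)) (dmono _ _ (emono _ _ (hex_le a)))
end

section
/- Let (X, R) be a Kripke frame with R a quasi-order, and suppose X is rooted (some point sees every point). Then X validates the modal formula alt_k = □p₁ ∨ □(p₁→p₂) ∨ ... ∨ □(p₁∧...∧p_k → p_{k+1}) if and only if |X| ≤ k. -/
/-- A rooted quasi-ordered Kripke frame validates `alt_k` iff it has at most `k` points. -/
theorem stmt13 {X : Type*} (R : X → X → Prop)
    (hRrefl : Reflexive R) (hRtrans : Transitive R)
    (r : X) (hroot : ∀ y : X, R r y) (k : ℕ) :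
    (∀ (v : ℕ → Set X) (x : X), ∃ i ≤ k,
        ∀ y : X, R x y → (∀ j < i, y ∈ v j) → y ∈ v i) ↔
      Cardinal.mk X ≤ (k : Cardinal) := by
  constructor
  · intro h
    by_contra hlt
    rw [not_le] at hlt
    have hsucc : ((k + 1 : ℕ) : Cardinal) ≤ Cardinal.mk X := by
      rw [Cardinal.nat_succ]; exact Order.succ_le_of_lt hlt
    have hsucc2 : Cardinal.mk (ULift (Fin (k + 1))) ≤ Cardinal.mk X := by
      simpa [Cardinal.mk_uLift, Cardinal.lift_natCast] using hsucc
    obtain ⟨f⟩ := Cardinal.le_def _ _ |>.mp hsucc2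
    obtain ⟨i, hik, hi⟩ :=
      h (fun j => {x | ∀ h : j ≤ k, x ≠ f ⟨⟨j, Nat.lt_succ_of_le h⟩⟩}) r
    have hmem : (∀ j < i, f ⟨⟨i, Nat.lt_succ_of_le hik⟩⟩ ∈
        {x : X | ∀ h : j ≤ k, x ≠ f ⟨⟨j, Nat.lt_succ_of_le h⟩⟩}) := by
      intro j hji hjk heq
      have h2 : (⟨i, Nat.lt_succ_of_le hik⟩ : Fin (k + 1)) = ⟨j, Nat.lt_succ_of_le hjk⟩ :=
        congrArg ULift.down (f.injective heq)
      simp only [Fin.mk.injEq] at h2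
      omega
    exact hi (f ⟨⟨i, Nat.lt_succ_of_le hik⟩⟩) (hroot _) hmem hik rfl
  · intro hle v x
    by_contra hc
    push_neg at hc
    choose g hg1 hg2 hg3 using fun (i : Fin (k + 1)) => hc i.val (Nat.lt_succ_iff.mp i.isLt)
    have hinj : Function.Injective (fun i : ULift (Fin (k + 1)) => g i.down) := by
      intro a b hab
      have hab' : g a.down = g b.down := hab
      by_contra hne
      have hne' : a.down ≠ b.down := fun h => hne (congrArg ULift.up h)
      rcases lt_or_gt_of_ne (fun h : a.down.val = b.down.val => hne' (Fin.ext h)) with h | h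
      · exact hg3 a.down (hab' ▸ hg2 b.down a.down.val h)
      · exact hg3 b.down (hab'.symm ▸ hg2 a.down b.down.val h)
    have hge : ((k + 1 : ℕ) : Cardinal) ≤ Cardinal.mk X := by
      have := Cardinal.mk_le_of_injective hinj
      simpa [Cardinal.mk_uLift, Cardinal.lift_natCast] using this
    exact absurd (hge.trans hle) (by exact_mod_cast Nat.not_succ_le_self k)
end

section
/- Let F = (X, E₁, E₂) be an S5₂-Kripke frame (two equivalence relations on a set X). Define T(F) = (X ⊔ L, R, E) where L = X/E₂, E is the smallest equivalence relation containing E₂ (on X) together with all pairs (x, [x]_{E₂}), and R = E₁ ∪ (X × L) ∪ (L × L). Then R is a quasi-order, E is an equivalence relation, and RE ⊆ ER. -/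
/-- The equivalence relation `E` of the frame `T(F)` on `X ⊔ X/E₂`. -/
def TE {X : Type*} (s : Setoid X) : X ⊕ Quotient s → X ⊕ Quotient s → Prop
  | Sum.inl x, Sum.inl y => s.r x y
  | Sum.inl x, Sum.inr α => Quotient.mk s x = α
  | Sum.inr α, Sum.inl y => Quotient.mk s y = α
  | Sum.inr α, Sum.inr β => α = β

/-- The quasi-order `R = E₁ ∪ (X × L) ∪ (L × L)` of the frame `T(F)` on `X ⊔ X/E₂`. -/
def TR {X : Type*} (E₁ : X → X → Prop) (s : Setoid X) :
    X ⊕ Quotient s → X ⊕ Quotient s → Prop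
  | Sum.inl x, Sum.inl y => E₁ x y
  | Sum.inl _, Sum.inr _ => True
  | Sum.inr _, Sum.inl _ => False
  | Sum.inr _, Sum.inr _ => True

/-- For an S5₂-frame `(X, E₁, E₂)`, in `T(F)` the relation `R` is a quasi-order,
`E` is an equivalence relation, and `RE ⊆ ER`. -/
theorem stmt14 {X : Type*} (E₁ : X → X → Prop) (hE₁ : Equivalence E₁) (s : Setoid X) :
    Reflexive (TR E₁ s) ∧ Transitive (TR E₁ s) ∧ Equivalence (TE s) ∧
      (∀ u v w : X ⊕ Quotient s, TE s u v → TR E₁ s v w →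
        ∃ u', TR E₁ s u u' ∧ TE s u' w) := by
  refine ⟨?_, ?_, ⟨?_, ?_, ?_⟩, ?_⟩
  · rintro (x | α)
    · exact hE₁.refl x
    · trivial
  · rintro (x | α) (y | β) (z | γ) h1 h2 <;> simp_all [TR]
    · exact hE₁.trans h1 h2
  · rintro (x | α)
    · exact s.refl x
    · rfl
  · rintro (x | α) (y | β) h
    · exact s.symm h
    · exact h
    · exact h
    · exact h.symm
  · rintro (x | α) (y | β) (z | γ) h1 h2 <;> simp only [TE] at h1 h2 ⊢
    · exact s.trans h1 h2
    · exact (Quotient.sound h1).trans h2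
    · exact Quotient.exact (h1.trans h2.symm)
    · exact h1.trans h2
    · exact (Quotient.sound h2).symm.trans h1
    · exact h1.symm.trans h2
    · exact h2.trans h1.symm
    · exact h1.trans h2
  · rintro u v (z | γ) _ _
    · exact ⟨Sum.inr (Quotient.mk s z), by cases u <;> trivial, rfl⟩
    · exact ⟨Sum.inr γ, by cases u <;> trivial, rfl⟩
end

section
/- With T(F) = (X ⊔ L, R, E) as constructed from an S5₂-Kripke frame F = (X, E₁, E₂), the composite relation Q = ER is the total relation on X ⊔ L; in particular every point is a Q-root. -/
/-- In `T(F)`, the composite relation `Q = ER` is the total relation; in particular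
every point is a `Q`-root. -/
theorem stmt15 {X : Type*} (E₁ : X → X → Prop) (hE₁ : Equivalence E₁) (s : Setoid X) :
    ∀ u w : X ⊕ Quotient s, ∃ v : X ⊕ Quotient s, TR E₁ s u v ∧ TE s v w := by
  intro u w
  cases w with
  | inl y => exact ⟨Sum.inr (Quotient.mk s y), by cases u <;> simp [TR, TE]⟩
  | inr β => exact ⟨Sum.inr β, by cases u <;> simp [TR, TE]⟩
end

section
/- Let F = (X, E₁, E₂) be an S5₂-Kripke frame and K an equivalence relation on X with E₁K ⊆ KE₁ and E₂K ⊆ KE₂. Define K̂ on X ⊔ L (where L = X/E₂) as K on X together with the induced relation K̄ on L (α K̄ β iff some x ∈ α is K-related to some y ∈ β). Then K̂ is an equivalence relation on X ⊔ L satisfying R K̂ ⊆ K̂ R and E K̂ ⊆ K̂ E, where R and E are the relations of the frame T(F). -/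
/-- The lift `K̂` of a correct partition `K` of `F` to `T(F)`: `K` on `X`, and the induced
relation `K̄` on the set of `E₂`-classes. -/
def Khat {X : Type*} (s : Setoid X) (K : X → X → Prop) :
    X ⊕ Quotient s → X ⊕ Quotient s → Prop
  | Sum.inl x, Sum.inl y => K x y
  | Sum.inr α, Sum.inr β => ∃ x y : X, Quotient.mk s x = α ∧ Quotient.mk s y = β ∧ K x y
  | _, _ => False

/-- If `K` is an equivalence relation on `X` with `E₁K ⊆ KE₁` and `E₂K ⊆ KE₂`, then `K̂`
is an equivalence relation on `X ⊔ L` with `R K̂ ⊆ K̂ R` and `E K̂ ⊆ K̂ E`. -/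
theorem stmt17 {X : Type*} (E₁ K : X → X → Prop)
    (hE₁ : Equivalence E₁) (s : Setoid X) (hK : Equivalence K)
    (hKE₁ : ∀ x y y' : X, K x y → E₁ y y' → ∃ x', E₁ x x' ∧ K x' y')
    (hKE₂ : ∀ x y y' : X, K x y → s.r y y' → ∃ x', s.r x x' ∧ K x' y') :
    Equivalence (Khat s K) ∧
    (∀ u v w : X ⊕ Quotient s, Khat s K u v → TR E₁ s v w →
      ∃ u', TR E₁ s u u' ∧ Khat s K u' w) ∧
    (∀ u v w : X ⊕ Quotient s, Khat s K u v → TE s v w →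
      ∃ u', TE s u u' ∧ Khat s K u' w) := by
  have mkeq : ∀ x y : X, s.r x y → Quotient.mk s x = Quotient.mk s y := fun x y h =>
    Quotient.sound h
  have exeq : ∀ x y : X, Quotient.mk s x = Quotient.mk s y → s.r x y := fun x y h =>
    Quotient.exact h
  have hrefl : ∀ u, Khat s K u u := by
    intro u
    cases u with
    | inl x => exact hK.refl x
    | inr α =>
      obtain ⟨x, rfl⟩ := Quotient.exists_rep α
      exact ⟨x, x, rfl, rfl, hK.refl x⟩
  refine ⟨⟨hrefl, ?_, ?_⟩, ?_, ?_⟩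
  · intro u v h
    cases u with
    | inl x => cases v with
      | inl y => exact hK.symm h
      | inr β => exact h.elim
    | inr α => cases v with
      | inl y => exact h.elim
      | inr β =>
        obtain ⟨x, y, hx, hy, hxy⟩ := h
        exact ⟨y, x, hy, hx, hK.symm hxy⟩
  · intro u v w h1 h2
    cases u with
    | inl x => cases v with
      | inl y => cases w with
        | inl z => exact hK.trans h1 h2
        | inr γ => exact h2.elim
      | inr β => exact h1.elim
    | inr α => cases v with
      | inl y => exact h1.elim
      | inr β => cases w with
        | inl z => exact h2.elim
        | inr γ =>
          obtain ⟨x, y, hx, hy, hxy⟩ := h1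
          obtain ⟨y', z, hy', hz, hyz⟩ := h2
          obtain ⟨x', hxx', hx'y'⟩ := hKE₂ x y y' hxy (exeq _ _ (hy.trans hy'.symm))
          exact ⟨x', z, (mkeq _ _ hxx').symm.trans hx, hz, hK.trans hx'y' hyz⟩
  · intro u v w h1 h2
    cases u with
    | inl x => cases v with
      | inl y => cases w with
        | inl z =>
          obtain ⟨x', h3, h4⟩ := hKE₁ x y z h1 h2
          exact ⟨Sum.inl x', h3, h4⟩
        | inr γ => exact ⟨Sum.inr γ, trivial, hrefl (Sum.inr γ)⟩
      | inr β => exact h1.elim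
    | inr α => cases v with
      | inl y => exact h1.elim
      | inr β => cases w with
        | inl z => exact h2.elim
        | inr γ => exact ⟨Sum.inr γ, trivial, hrefl (Sum.inr γ)⟩
  · intro u v w h1 h2
    cases u with
    | inl x => cases v with
      | inl y => cases w with
        | inl z =>
          obtain ⟨x', h3, h4⟩ := hKE₂ x y z h1 h2
          exact ⟨Sum.inl x', h3, h4⟩
        | inr γ => exact ⟨Sum.inr (Quotient.mk s x), rfl, x, y, rfl, h2, h1⟩
      | inr β => exact h1.elim
    | inr α => cases v with
      | inl y => exact h1.elim
      | inr β => cases w with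
        | inl z =>
          obtain ⟨x, y, hx, hy, hxy⟩ := h1
          obtain ⟨x', hxx', hx'z⟩ := hKE₂ x y z hxy (exeq _ _ (hy.trans h2.symm))
          exact ⟨Sum.inl x', (mkeq _ _ hxx').symm.trans hx, hx'z⟩
        | inr γ =>
          subst h2
          exact ⟨Sum.inr α, rfl, h1⟩
end

section
/- In a Boolean algebra with an S4 operator ◇ and an S5 operator ∃ satisfying ∃◇a ≤ ◇∃a, the set H_■ of fixpoints of ■ = □∀ is a bounded sublattice of B closed under the Heyting implication a → b := ■(¬a ∨ b); in particular, for a, b, c ∈ H_■, a ∧ b ≤ c iff a ≤ ■(¬b ∨ c). -/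
section aux

variable {B : Type*} [BooleanAlgebra B] {f : B → B}

lemma f_mono (hf_or : ∀ a b : B, f (a ⊔ b) = f a ⊔ f b) {a b : B} (h : a ≤ b) :
    f a ≤ f b := by
  have : f b = f a ⊔ f b := by rw [← hf_or, sup_eq_right.mpr h]
  rw [this]; exact le_sup_left

lemma boxOf_mono (hf_or : ∀ a b : B, f (a ⊔ b) = f a ⊔ f b) {a b : B} (h : a ≤ b) :
    boxOf f a ≤ boxOf f b :=
  compl_le_compl (f_mono hf_or (compl_le_compl h))

lemma boxOf_le (hf_le : ∀ a : B, a ≤ f a) (a : B) : boxOf f a ≤ a := by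
  simpa [boxOf] using compl_le_compl (hf_le aᶜ)

lemma boxOf_idem (hf_le : ∀ a : B, a ≤ f a) (hf_idem : ∀ a : B, f (f a) ≤ f a) (a : B) :
    boxOf f (boxOf f a) = boxOf f a := by
  refine le_antisymm (boxOf_le hf_le _) ?_
  unfold boxOf
  rw [compl_compl]
  exact compl_le_compl (hf_idem aᶜ)

lemma boxOf_inf (hf_or : ∀ a b : B, f (a ⊔ b) = f a ⊔ f b) (a b : B) :
    boxOf f (a ⊓ b) = boxOf f a ⊓ boxOf f b := by
  unfold boxOf
  rw [compl_inf, hf_or, compl_sup]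

lemma boxOf_top (hf0 : f (⊥ : B) = ⊥) : boxOf f (⊤ : B) = ⊤ := by
  simp [boxOf, hf0]

end aux

/-- In an MS4-algebra, the set of `■`-fixpoints (`■ = □∀`) is a bounded sublattice closed
under the Heyting implication `a → b := ■(¬a ∨ b)`, and residuation holds on it. -/
theorem stmt18 {B : Type*} [BooleanAlgebra B] (dia ex : B → B)
    (hdia0 : dia (⊥ : B) = ⊥)
    (hdia_or : ∀ a b : B, dia (a ⊔ b) = dia a ⊔ dia b)
    (hdia_le : ∀ a : B, a ≤ dia a)
    (hdia_idem : ∀ a : B, dia (dia a) ≤ dia a)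
    (hex0 : ex (⊥ : B) = ⊥)
    (hex_or : ∀ a b : B, ex (a ⊔ b) = ex a ⊔ ex b)
    (hex_le : ∀ a : B, a ≤ ex a)
    (hex_idem : ∀ a : B, ex (ex a) ≤ ex a)
    (hex5 : ∀ a : B, ex ((ex aᶜ)ᶜ) ≤ (ex aᶜ)ᶜ)
    (hms4 : ∀ a : B, ex (dia a) ≤ dia (ex a)) :
    boxOf dia (boxOf ex (⊥ : B)) = ⊥ ∧
    boxOf dia (boxOf ex (⊤ : B)) = ⊤ ∧
    (∀ a b : B, boxOf dia (boxOf ex a) = a → boxOf dia (boxOf ex b) = b →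
      boxOf dia (boxOf ex (a ⊓ b)) = a ⊓ b) ∧
    (∀ a b : B, boxOf dia (boxOf ex a) = a → boxOf dia (boxOf ex b) = b →
      boxOf dia (boxOf ex (a ⊔ b)) = a ⊔ b) ∧
    (∀ a b : B, boxOf dia (boxOf ex a) = a → boxOf dia (boxOf ex b) = b →
      boxOf dia (boxOf ex (boxOf dia (boxOf ex (aᶜ ⊔ b)))) =
        boxOf dia (boxOf ex (aᶜ ⊔ b))) ∧
    (∀ a b c : B, boxOf dia (boxOf ex a) = a → boxOf dia (boxOf ex b) = b →
      boxOf dia (boxOf ex c) = c →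
      (a ⊓ b ≤ c ↔ a ≤ boxOf dia (boxOf ex (bᶜ ⊔ c)))) := by
  set box : B → B := boxOf dia with hbox
  set fa : B → B := boxOf ex with hfa
  -- basic facts
  have hbox_le : ∀ a : B, box a ≤ a := boxOf_le hdia_le
  have hfa_le : ∀ a : B, fa a ≤ a := boxOf_le hex_le
  have hbox_mono : ∀ {a b : B}, a ≤ b → box a ≤ box b := fun h => boxOf_mono hdia_or h
  have hfa_mono : ∀ {a b : B}, a ≤ b → fa a ≤ fa b := fun h => boxOf_mono hex_or h
  have hsq_le : ∀ a : B, box (fa a) ≤ a := fun a => le_trans (hbox_le _) (hfa_le _)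
  have hsq_mono : ∀ {a b : B}, a ≤ b → box (fa a) ≤ box (fa b) :=
    fun h => hbox_mono (hfa_mono h)
  -- MS4 dual: □∀a ≤ ∀□a
  have hdual : ∀ a : B, box (fa a) ≤ fa (box a) := by
    intro a
    show (dia (fa a)ᶜ)ᶜ ≤ (ex (box a)ᶜ)ᶜ
    apply compl_le_compl
    have h1 : (fa a)ᶜ = ex aᶜ := by simp [hfa, boxOf]
    have h2 : (box a)ᶜ = dia aᶜ := by simp [hbox, boxOf]
    rw [h1, h2]
    exact hms4 aᶜ
  have hfa_idem : ∀ a : B, fa (fa a) = fa a := boxOf_idem hex_le hex_idem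
  have hbox_idem : ∀ a : B, box (box a) = box a := boxOf_idem hdia_le hdia_idem
  -- ■■a = ■a
  have hsq_idem : ∀ a : B, box (fa (box (fa a))) = box (fa a) := by
    intro a
    refine le_antisymm (hsq_le _) ?_
    have h1 : box (fa a) ≤ fa (box (fa a)) := by
      have := hdual (fa a)
      rwa [hfa_idem] at this
    calc box (fa a) = box (box (fa a)) := (hbox_idem _).symm
      _ ≤ box (fa (box (fa a))) := hbox_mono h1
  refine ⟨?_, ?_, ?_, ?_, ?_, ?_⟩
  · refine le_antisymm ?_ bot_le
    exact hsq_le ⊥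
  · have h1 : fa (⊤ : B) = ⊤ := boxOf_top hex0
    show box (fa ⊤) = ⊤
    rw [h1]
    exact boxOf_top hdia0
  · intro a b ha hb
    show box (fa (a ⊓ b)) = a ⊓ b
    rw [hfa, hbox, boxOf_inf hex_or, boxOf_inf hdia_or]
    rw [hbox, hfa] at ha hb
    rw [ha, hb]
  · intro a b ha hb
    refine le_antisymm (hsq_le _) ?_
    refine sup_le ?_ ?_
    · calc a = box (fa a) := ha.symm
        _ ≤ box (fa (a ⊔ b)) := hsq_mono le_sup_left
    · calc b = box (fa b) := hb.symm
        _ ≤ box (fa (a ⊔ b)) := hsq_mono le_sup_right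
  · intro a b _ _
    exact hsq_idem _
  · intro a b c ha hb hc
    constructor
    · intro h
      have h1 : a ≤ bᶜ ⊔ c := by
        rw [sup_comm, ← himp_eq]
        exact le_himp_iff.mpr h
      calc a = box (fa a) := ha.symm
        _ ≤ box (fa (bᶜ ⊔ c)) := hsq_mono h1
    · intro h
      have h1 : a ≤ bᶜ ⊔ c := le_trans h (hsq_le _)
      calc a ⊓ b ≤ (bᶜ ⊔ c) ⊓ b := inf_le_inf_right _ h1
        _ ≤ c := by
            rw [inf_sup_right]
            simp
end
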